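/- Let A be a unital C*-algebra and let t ↦ u(t) be a norm-continuous map from ℝ into the unitary group of A with u(0) = 1 and u(s + t) = u(s)·u(t) for all s, t ∈ ℝ. Then there exists a self-adjoint element h ∈ A such that u(t) = exp(i t h) for all t ∈ ℝ. -/

import Mathlib

open NormedSpace intervalIntegral


/-- Uniformly continuous version of Stone's one-parameter theorem: a norm-continuous
one-parameter group of unitaries in a unital C*-algebra has the form
`u(t) = exp(i t h)` for some self-adjoint `h`. -/
theorem stone_one_parameter_unitary_group
    {A : Type*} [CStarAlgebra A]
    (u : ℝ → unitary A)
    (hcont : Continuous fun t => (u t : A))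
    (h0 : u 0 = 1)
    (hadd : ∀ s t : ℝ, u (s + t) = u s * u t) :
    ∃ h : A, IsSelfAdjoint h ∧
      ∀ t : ℝ, (u t : A) = NormedSpace.exp (((t : ℂ) * Complex.I) • h) := by
  set f : ℝ → A := fun t => (u t : A) with hfdef
  have hfc : Continuous f := hcont
  have hf0 : f 0 = 1 := by simp [hfdef, h0]
  have hfadd : ∀ s t, f (s + t) = f s * f t := fun s t => by
    simp [hfdef, hadd s t]
  -- Step A: find δ > 0 with the averaged integral invertible
  obtain ⟨δ₀, hδ₀pos, hδ₀⟩ := Metric.continuousAt_iff.mp hfc.continuousAt (1/2) (by norm_num)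
  set δ : ℝ := δ₀ / 2 with hδdef
  have hδpos : 0 < δ := by positivity
  have hsmall : ∀ s ∈ Set.uIoc (0:ℝ) δ, ‖f s - (1:A)‖ ≤ 1/2 := by
    intro s hs
    rw [Set.uIoc_of_le hδpos.le] at hs
    have : dist s 0 < δ₀ := by
      rw [Real.dist_eq, sub_zero, abs_of_pos hs.1]
      calc s ≤ δ := hs.2
        _ < δ₀ := by rw [hδdef]; linarith
    have := hδ₀ this
    rw [dist_eq_norm, hf0] at this
    exact this.le
  set a : A := ∫ s in (0:ℝ)..δ, f s with hadef
  have hint : ∀ c d : ℝ, IntervalIntegrable f MeasureTheory.volume c d :=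
    fun c d => hfc.intervalIntegrable c d
  have hbound : ‖a - δ • (1:A)‖ ≤ δ/2 := by
    have h1 : a - δ • (1:A) = ∫ s in (0:ℝ)..δ, (f s - 1) := by
      rw [intervalIntegral.integral_sub (hint 0 δ) (intervalIntegrable_const)]
      simp [hadef]
    rw [h1]
    have := intervalIntegral.norm_integral_le_of_norm_le_const (C := 1/2) hsmall
    calc ‖∫ s in (0:ℝ)..δ, (f s - 1)‖ ≤ (1/2) * |δ - 0| := this
      _ = δ/2 := by rw [sub_zero, abs_of_pos hδpos]; ring
  have hva : IsUnit a := by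
    set c : A := δ⁻¹ • a with hcdef
    have hc : ‖(1:A) - c‖ < 1 := by
      have : (1:A) - c = δ⁻¹ • (δ • (1:A) - a) := by
        rw [smul_sub, smul_smul, inv_mul_cancel₀ hδpos.ne', one_smul]
      rw [this, norm_smul]
      calc ‖δ⁻¹‖ * ‖δ • (1:A) - a‖ ≤ δ⁻¹ * (δ/2) := by
            rw [Real.norm_eq_abs, abs_of_pos (by positivity : (0:ℝ) < δ⁻¹)]
            apply mul_le_mul_of_nonneg_left _ (by positivity)
            rwa [← norm_neg, neg_sub]
        _ = 1/2 := by field_simp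
        _ < 1 := by norm_num
    have hcu : IsUnit c := by
      have := (Units.oneSub (1 - c) hc).isUnit
      rwa [Units.val_oneSub, sub_sub_cancel] at this
    have : a = (Units.mk0 δ hδpos.ne') • c := by
      simp [hcdef, smul_smul, Units.smul_def, mul_inv_cancel₀ hδpos.ne']
    rw [this]
    exact hcu.smul _
  obtain ⟨v, hv⟩ := hva
  -- Step B: f t * a = F (t+δ) - F t where F r = ∫_0^r f
  set F : ℝ → A := fun r => ∫ s in (0:ℝ)..r, f s with hFdef
  have key : ∀ t : ℝ, f t * a = F (t + δ) - F t := by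
    intro t
    have h1 : f t * a = ∫ s in (0:ℝ)..δ, f t * f s := by
      simpa using ((ContinuousLinearMap.mul ℝ A (f t)).intervalIntegral_comp_comm (hint 0 δ)).symm
    have h2 : (∫ s in (0:ℝ)..δ, f t * f s) = ∫ s in (0:ℝ)..δ, f (t + s) := by
      refine intervalIntegral.integral_congr fun s _ => ?_
      rw [hfadd]
    have h3 : (∫ s in (0:ℝ)..δ, f (t + s)) = ∫ s in t..(t+δ), f s := by
      simpa using intervalIntegral.integral_comp_add_left f t (a := 0) (b := δ)
    have h4 : (∫ s in t..(t+δ), f s) = F (t + δ) - F t := by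
      have := intervalIntegral.integral_add_adjacent_intervals (hint 0 t) (hint t (t+δ))
      rw [hFdef]; dsimp only
      rw [eq_sub_iff_add_eq, add_comm]
      exact this
    rw [h1, h2, h3, h4]
  -- Step C: f is differentiable
  have hF : ∀ t : ℝ, HasDerivAt F (f t) t := by
    intro t
    exact intervalIntegral.integral_hasDerivAt_right (hint 0 t)
      (hfc.stronglyMeasurableAtFilter _ _) hfc.continuousAt
  set D : ℝ → A := fun t => (f (t + δ) - f t) * ↑v⁻¹ with hDdef
  have hder : ∀ t : ℝ, HasDerivAt f (D t) t := by
    intro t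
    have h1 : HasDerivAt (fun t => F (t + δ) - F t) (f (t + δ) - f t) t :=
      ((hF (t + δ)).comp_add_const t δ).sub (hF t)
    have h2 : HasDerivAt (fun t => (F (t + δ) - F t) * ↑v⁻¹)
        ((f (t + δ) - f t) * ↑v⁻¹) t := h1.mul_const _
    have h3 : (fun t => (F (t + δ) - F t) * ↑v⁻¹) = f := by
      funext s
      rw [← key s, ← hv, mul_assoc, Units.mul_inv, mul_one]
    rwa [h3] at h2
  -- Step D: f' t = b * f t
  set b : A := D 0 with hbdef
  have hderb : ∀ t : ℝ, HasDerivAt f (b * f t) t := by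
    intro t
    have h1 : HasDerivAt (fun s : ℝ => f (s + t)) (D t) 0 :=
      HasDerivAt.comp_add_const 0 t (by simpa using hder t)
    have h3 : (fun s : ℝ => f (s + t)) = fun s => f s * f t := funext fun s => hfadd s t
    rw [h3] at h1
    have h2 : HasDerivAt (fun s : ℝ => f s * f t) (b * f t) 0 := (hder 0).mul_const (f t)
    rw [← h1.unique h2]
    exact hder t
  have hder0 : HasDerivAt f b 0 := by
    have := hderb 0; rwa [hf0, mul_one] at this
  -- Step E: f t = exp (t • b)
  have hexp : ∀ t : ℝ, f t = exp (t • b) := by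
    set w : ℝ → A := fun t => exp (t • (-b)) * f t with hwdef
    have hw : ∀ t, HasDerivAt w 0 t := by
      intro t
      have h1 : HasDerivAt (fun t : ℝ => exp (t • (-b))) (exp (t • (-b)) * (-b)) t :=
        hasDerivAt_exp_smul_const (-b) t
      have h2 := h1.mul (hderb t)
      convert h2 using 1
      · rfl
      simp [mul_assoc, mul_neg, neg_mul]
    have hconst : ∀ t, w t = w 0 := fun t =>
      is_const_of_deriv_eq_zero (fun x => (hw x).differentiableAt) (fun x => (hw x).deriv) t 0
    intro t
    have h0w : w 0 = 1 := by simp [hwdef, hf0]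
    have hmain : exp (t • b) * w t = f t := by
      rw [hwdef]; dsimp only
      rw [← mul_assoc, smul_neg, ← exp_add_of_commute_of_mem_ball (𝕂 := ℝ) ((Commute.refl (t • b)).neg_right)
        ((expSeries_radius_eq_top ℝ A).symm ▸ edist_lt_top _ _)
        ((expSeries_radius_eq_top ℝ A).symm ▸ edist_lt_top _ _)]
      simp
    rw [← hmain, hconst, h0w, mul_one]
  -- Step F: star b = -b
  have hstar : star b = -b := by
    have hsf : ∀ t : ℝ, star (f t) = f (-t) := by
      intro t
      have hm := (u t).prop
      rw [Unitary.mem_iff] at hm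
      calc star (f t) = star (f t) * (f t * f (-t)) := by
            rw [← hfadd, add_neg_cancel, hf0, mul_one]
        _ = (star (f t) * f t) * f (-t) := by rw [mul_assoc]
        _ = f (-t) := by rw [hm.1, one_mul]
    have h1 : HasDerivAt (fun t : ℝ => star (f t)) (star b) 0 := hder0.star
    have h2 : HasDerivAt (fun t : ℝ => f (-t)) (-b) 0 := by
      have := HasDerivAt.scomp (0:ℝ) (g₁ := f) (by simpa using hder0) (hasDerivAt_neg (0:ℝ))
      simpa [Function.comp_def] using this
    have h3 : (fun t : ℝ => star (f t)) = fun t => f (-t) := funext hsf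
    rw [h3] at h1
    exact h1.unique h2
  -- conclusion
  refine ⟨(-Complex.I) • b, ?_, ?_⟩
  · rw [IsSelfAdjoint, star_smul, hstar]
    simp [smul_neg, ← neg_smul]
  · intro t
    have h1 : ((t:ℂ) * Complex.I) • ((-Complex.I) • b) = (t:ℂ) • b := by
      rw [smul_smul]
      congr 1
      have := Complex.I_mul_I
      ring_nf
      linear_combination (-(t:ℂ)) * this
    have h2 : ((t:ℂ)) • b = t • b := by
      rw [← Complex.coe_algebraMap, algebraMap_smul]
    rw [h1, h2]
    exact hexp t
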